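/- Let d ≥ 1, H_0 ∈ (1/2,1) and H = (H_1,…,H_d) ∈ (0,1)^d. If |H| + 2H_0 ≤ d, then for every t > 0 the first-chaos integral diverges: ∫_0^t ∫_0^t ∫_{ℝ^d} exp(−(1/2)(2t − s − r)|ξ|²) · ∏_{k=1}^d |ξ_k|^{1−2H_k} · |s − r|^{2H_0−2} dξ ds dr = +∞. -/

import Mathlib

open MeasureTheory Real ENNReal

theorem helper_tsum_lintegral_le {α : Type*} [MeasurableSpace α] (μ : Measure α)
    (g : ℕ → α → ℝ≥0∞) : ∑' n, ∫⁻ a, g n a ∂μ ≤ ∫⁻ a, ∑' n, g n a ∂μ := by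
  rw [ENNReal.tsum_eq_iSup_sum]
  refine iSup_le fun s => ?_
  have h1 : ∑ n ∈ s, ∫⁻ a, g n a ∂μ ≤ ∫⁻ a, ∑ n ∈ s, g n a ∂μ := by
    classical
    induction s using Finset.induction_on with
    | empty => simp
    | insert _ _ hn ih =>
      rw [Finset.sum_insert hn]
      refine le_trans (add_le_add_right ih _) ?_
      refine le_trans (MeasureTheory.le_lintegral_add _ _) (le_of_eq ?_)
      exact lintegral_congr fun a => (Finset.sum_insert (f := fun n => g n a) hn).symm
  exact h1.trans (lintegral_mono fun a => ENNReal.sum_le_tsum s)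

set_option maxHeartbeats 1000000 in
/-- For `d ≥ 1`, `H₀ ∈ (1/2,1)`, `H ∈ (0,1)^d`, if `|H| + 2H₀ ≤ d`
then for every `t > 0` the first-chaos integral diverges:
`∫_0^t ∫_0^t ∫_{ℝ^d} exp(−(1/2)(2t − s − r)|ξ|²) ∏_k |ξ_k|^{1−2H_k} |s − r|^{2H₀−2}
  dξ ds dr = +∞`. -/
theorem first_chaos_diverges (d : ℕ) (hd : 1 ≤ d) (H0 : ℝ)
    (hH0 : H0 ∈ Set.Ioo (1/2 : ℝ) 1) (H : Fin d → ℝ)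
    (hH : ∀ k, H k ∈ Set.Ioo (0 : ℝ) 1)
    (hcond : (∑ k, H k) + 2 * H0 ≤ d) :
    ∀ t : ℝ, 0 < t →
      (∫⁻ s in Set.Ioo (0 : ℝ) t, ∫⁻ r in Set.Ioo (0 : ℝ) t,
        ∫⁻ ξ : Fin d → ℝ,
          ENNReal.ofReal (Real.exp (-(1/2) * (2 * t - s - r) * ∑ k, (ξ k) ^ 2) *
            (∏ k, |ξ k| ^ (1 - 2 * H k)) * |s - r| ^ (2 * H0 - 2))) = ⊤ := by
  obtain ⟨hH0l, hH0u⟩ := hH0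
  intro t ht
  classical
  set f : ℝ → ℝ → (Fin d → ℝ) → ℝ≥0∞ := fun s r ξ =>
    ENNReal.ofReal (Real.exp (-(1/2) * (2 * t - s - r) * ∑ k, (ξ k) ^ 2) *
      (∏ k, |ξ k| ^ (1 - 2 * H k)) * |s - r| ^ (2 * H0 - 2)) with hf
  have hd0 : (0:ℝ) < d := by exact_mod_cast hd
  have hd1 : (1:ℝ) ≤ d := by exact_mod_cast hd
  set SH : ℝ := ∑ k, H k with hSH
  -- the time window width
  set δ : ℕ → ℝ := fun n => min t ((4 * (d:ℝ) * 4 ^ n)⁻¹) with hδdef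
  have hDn : ∀ n : ℕ, (0:ℝ) < 4 * (d:ℝ) * 4 ^ n := fun n => by positivity
  have hδpos : ∀ n, 0 < δ n := fun n => lt_min ht (by positivity)
  have hδt : ∀ n, δ n ≤ t := fun n => min_le_left _ _
  have hδinv : ∀ n, δ n ≤ (4 * (d:ℝ) * 4 ^ n)⁻¹ := fun n => min_le_right _ _
  have hδlow : ∀ n, min t 1 * (4 * (d:ℝ) * 4 ^ n)⁻¹ ≤ δ n := by
    intro n
    have hinv1 : (4 * (d:ℝ) * 4 ^ n)⁻¹ ≤ 1 := by
      refine inv_le_one_of_one_le₀ ?_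
      have h4 : (1:ℝ) ≤ 4 ^ n := one_le_pow₀ (by norm_num)
      nlinarith [hd1, h4]
    refine le_min ?_ ?_
    · calc min t 1 * (4 * (d:ℝ) * 4 ^ n)⁻¹ ≤ t * 1 :=
        mul_le_mul (min_le_left _ _) hinv1 (by positivity) ht.le
      _ = t := mul_one t
    · calc min t 1 * (4 * (d:ℝ) * 4 ^ n)⁻¹ ≤ 1 * (4 * (d:ℝ) * 4 ^ n)⁻¹ :=
        mul_le_mul_of_nonneg_right (min_le_right _ _) (by positivity)
      _ = _ := one_mul _
  -- the sets
  set S : ℕ → Set ℝ := fun n => Set.Ioo (t - δ n) (t - δ n / 2) with hSdef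
  set R : ℕ → Set ℝ := fun n => Set.Ioo (t - δ n / 2) t with hRdef
  set A : ℕ → Set (Fin d → ℝ) :=
    fun n => Set.univ.pi fun _ => Set.Ioo ((2:ℝ) ^ n) (2 ^ (n+1)) with hAdef
  have hAmeas : ∀ n, MeasurableSet (A n) :=
    fun n => MeasurableSet.univ_pi fun _ => measurableSet_Ioo
  have hSsub : ∀ n, S n ⊆ Set.Ioo 0 t := by
    intro n x hx
    obtain ⟨h1, h2⟩ := hx
    have := hδpos n; have := hδt n
    exact ⟨by linarith, by linarith⟩
  have hRsub : ∀ n, R n ⊆ Set.Ioo 0 t := by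
    intro n x hx
    obtain ⟨h1, h2⟩ := hx
    have := hδpos n; have := hδt n
    exact ⟨by linarith, h2⟩
  -- volumes
  have hvolS : ∀ n, volume (S n) = ENNReal.ofReal (δ n / 2) := by
    intro n; rw [hSdef]; rw [Real.volume_Ioo]; congr 1; ring
  have hvolR : ∀ n, volume (R n) = ENNReal.ofReal (δ n / 2) := by
    intro n; rw [hRdef]; rw [Real.volume_Ioo]; congr 1; ring
  have hvolA : ∀ n, volume (A n) = ENNReal.ofReal (((2:ℝ) ^ n) ^ d) := by
    intro n
    rw [hAdef, volume_pi_pi]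
    have h2 : (2:ℝ) ^ (n+1) - 2 ^ n = 2 ^ n := by ring
    simp only [Real.volume_Ioo, h2, Finset.prod_const, Finset.card_univ, Fintype.card_fin]
    rw [← ENNReal.ofReal_pow (by positivity)]
  -- the constant
  set cr : ℝ := exp (-1) * (2:ℝ)⁻¹ ^ d * (min t 1 * (4 * (d:ℝ))⁻¹) ^ (2 * H0) / 4 with hcr
  have hcrpos : 0 < cr := by
    have h1 : (0:ℝ) < min t 1 * (4 * (d:ℝ))⁻¹ := by positivity
    have := Real.rpow_pos_of_pos h1 (2 * H0)
    positivity
  -- lower bound for the integrand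
  set L : ℕ → ℝ := fun n =>
    exp (-1) * ((2:ℝ)⁻¹ ^ d * ((2:ℝ) ^ n) ^ ((d:ℝ) - 2 * SH)) * (δ n) ^ (2 * H0 - 2) with hL
  have hpoint : ∀ n : ℕ, ∀ s ∈ S n, ∀ r ∈ R n, ∀ ξ ∈ A n,
      ENNReal.ofReal (L n) ≤ f s r ξ := by
    intro n s hs r hr ξ hξA
    obtain ⟨hs1, hs2⟩ := hs
    obtain ⟨hr1, hr2⟩ := hr
    have hξ : ∀ k, ξ k ∈ Set.Ioo ((2:ℝ) ^ n) (2 ^ (n+1)) := fun k => Set.mem_univ_pi.mp hξA k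
    have hb : (0:ℝ) < 2 ^ n := by positivity
    have hδp := hδpos n
    -- (i) exponential factor
    have hsum_nonneg : (0:ℝ) ≤ ∑ k, ξ k ^ 2 := by positivity
    have hsq : ((2:ℝ) ^ (n+1)) ^ 2 = 4 * 4 ^ n := by
      have h9 : ((2:ℝ) ^ (n+1)) ^ 2 = ((2:ℝ) ^ 2) ^ (n+1) := by
        rw [← pow_mul, ← pow_mul, mul_comm]
      rw [h9, show ((2:ℝ)^2) = 4 by norm_num, pow_succ, mul_comm]
    have hsum_le : ∑ k, (ξ k) ^ 2 ≤ (d:ℝ) * (4 * 4 ^ n) := by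
      calc ∑ k, (ξ k) ^ 2 ≤ ∑ _k : Fin d, ((2:ℝ) ^ (n+1)) ^ 2 :=
          Finset.sum_le_sum fun k _ => by
            have h1 := (hξ k).1; have h2 := (hξ k).2
            nlinarith
        _ = (d:ℝ) * ((2:ℝ) ^ (n+1)) ^ 2 := by
            rw [Finset.sum_const, Finset.card_univ, Fintype.card_fin, nsmul_eq_mul]
        _ = (d:ℝ) * (4 * 4 ^ n) := by rw [hsq]
    have h2t : 2 * t - s - r ≤ 2 * δ n := by linarith
    have hδmul : δ n * (4 * (d:ℝ) * 4 ^ n) ≤ 1 := by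
      calc δ n * (4 * (d:ℝ) * 4 ^ n) ≤ (4 * (d:ℝ) * 4 ^ n)⁻¹ * (4 * (d:ℝ) * 4 ^ n) :=
          mul_le_mul_of_nonneg_right (hδinv n) (hDn n).le
        _ = 1 := inv_mul_cancel₀ (hDn n).ne'
    have hexp : exp (-1) ≤ exp (-(1/2) * (2 * t - s - r) * ∑ k, (ξ k) ^ 2) := by
      rw [Real.exp_le_exp]
      have e1 : (2*t - s - r) * (∑ k, (ξ k) ^ 2) ≤ (2 * δ n) * (∑ k, (ξ k) ^ 2) :=
        mul_le_mul_of_nonneg_right h2t hsum_nonneg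
      have e2 : (2 * δ n) * (∑ k, (ξ k) ^ 2) ≤ (2 * δ n) * ((d:ℝ) * (4 * 4 ^ n)) :=
        mul_le_mul_of_nonneg_left hsum_le (by positivity)
      have e3 : (2 * δ n) * ((d:ℝ) * (4 * 4 ^ n)) = 2 * (δ n * (4 * (d:ℝ) * 4 ^ n)) := by ring
      have e4 : (2*t - s - r) * (∑ k, (ξ k) ^ 2) ≤ 2 := by
        rw [e3] at e2; linarith
      linarith [e4]
    -- (ii) product factor
    have hstep : ∀ k : Fin d, ((2:ℝ) ^ n) ^ (1 - 2 * H k) * 2⁻¹ ≤ |ξ k| ^ (1 - 2 * H k) := by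
      intro k
      have hξk1 := (hξ k).1; have hξk2 := (hξ k).2
      have hξkpos : 0 < ξ k := lt_trans hb hξk1
      rw [abs_of_pos hξkpos]
      rcases le_or_gt 0 (1 - 2 * H k) with he | he
      · have h1 : ((2:ℝ) ^ n) ^ (1 - 2*H k) ≤ ξ k ^ (1 - 2*H k) :=
          Real.rpow_le_rpow hb.le hξk1.le he
        nlinarith [Real.rpow_nonneg hb.le (1 - 2*H k)]
      · have h1 : ((2:ℝ) ^ (n+1)) ^ (1 - 2*H k) ≤ ξ k ^ (1 - 2*H k) :=
          Real.rpow_le_rpow_of_nonpos hξkpos hξk2.le he.le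
        have h2 : ((2:ℝ) ^ (n+1)) ^ (1 - 2*H k) = ((2:ℝ) ^ n) ^ (1 - 2*H k) * (2:ℝ) ^ (1 - 2*H k) := by
          rw [pow_succ, Real.mul_rpow (by positivity) (by norm_num)]
        have h3 : (2:ℝ)⁻¹ ≤ (2:ℝ) ^ (1 - 2*H k) := by
          have h4 := Real.rpow_le_rpow_of_exponent_le (x := 2) one_le_two
            (show (-1:ℝ) ≤ 1 - 2*H k by linarith [(hH k).2])
          rwa [Real.rpow_neg_one] at h4
        calc ((2:ℝ) ^ n) ^ (1 - 2*H k) * 2⁻¹ ≤ ((2:ℝ) ^ n) ^ (1 - 2*H k) * (2:ℝ) ^ (1 - 2*H k) :=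
            mul_le_mul_of_nonneg_left h3 (Real.rpow_nonneg hb.le _)
          _ = ((2:ℝ) ^ (n+1)) ^ (1 - 2*H k) := h2.symm
          _ ≤ _ := h1
    have hsum_e : ∑ k : Fin d, (1 - 2 * H k) = (d:ℝ) - 2 * SH := by
      rw [Finset.sum_sub_distrib, Finset.sum_const, Finset.card_univ, Fintype.card_fin,
        ← Finset.mul_sum, hSH]
      simp
    have hprod : (2:ℝ)⁻¹ ^ d * ((2:ℝ) ^ n) ^ ((d:ℝ) - 2 * SH) ≤ ∏ k, |ξ k| ^ (1 - 2 * H k) := by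
      have heq : (2:ℝ)⁻¹ ^ d * ((2:ℝ) ^ n) ^ ((d:ℝ) - 2 * SH)
          = ∏ k : Fin d, (((2:ℝ) ^ n) ^ (1 - 2 * H k) * 2⁻¹) := by
        rw [Finset.prod_mul_distrib, Finset.prod_const, Finset.card_univ, Fintype.card_fin,
          ← Real.rpow_sum_of_pos hb, hsum_e, mul_comm]
      rw [heq]
      exact Finset.prod_le_prod (fun k _ => by positivity) (fun k _ => hstep k)
    -- (iii) |s - r| factor
    have hrs_pos : 0 < r - s := by linarith
    have hrs_le : r - s ≤ δ n := by linarith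
    have habs : |s - r| = r - s := by rw [abs_sub_comm]; exact abs_of_pos hrs_pos
    have h3 : (δ n) ^ (2*H0 - 2) ≤ |s - r| ^ (2*H0 - 2) := by
      rw [habs]
      exact Real.rpow_le_rpow_of_nonpos hrs_pos hrs_le (by linarith)
    -- combine
    simp only [hf]
    apply ENNReal.ofReal_le_ofReal
    simp only [hL]
    have hnn1 : 0 ≤ exp (-(1/2) * (2*t - s - r) * ∑ k, (ξ k) ^ 2) * ∏ k, |ξ k| ^ (1 - 2*H k) := by
      have : (0:ℝ) ≤ ∏ k, |ξ k| ^ (1 - 2*H k) :=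
        Finset.prod_nonneg fun k _ => Real.rpow_nonneg (abs_nonneg _) _
      positivity
    calc exp (-1) * ((2:ℝ)⁻¹ ^ d * ((2:ℝ) ^ n) ^ ((d:ℝ) - 2 * SH)) * (δ n) ^ (2*H0 - 2)
        ≤ (exp (-(1/2) * (2*t - s - r) * ∑ k, (ξ k) ^ 2) * ∏ k, |ξ k| ^ (1 - 2*H k)) *
            (δ n) ^ (2*H0 - 2) := by
          apply mul_le_mul_of_nonneg_right ?_ (Real.rpow_nonneg hδp.le _)
          apply mul_le_mul hexp hprod ?_ (Real.exp_pos _).le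
          have := Real.rpow_nonneg hb.le ((d:ℝ) - 2 * SH)
          positivity
      _ ≤ _ := mul_le_mul_of_nonneg_left h3 hnn1
  -- per-n integral lower bound
  have harith : ∀ n : ℕ, ENNReal.ofReal cr ≤
      ENNReal.ofReal (L n) * volume (A n) * volume (R n) * volume (S n) := by
    intro n
    have hδp := hδpos n
    have hb : (0:ℝ) < 2 ^ n := by positivity
    have hb1 : (1:ℝ) ≤ 2 ^ n := one_le_pow₀ one_le_two
    have hmin : (0:ℝ) < min t 1 := lt_min ht one_pos
    have hm' : (0:ℝ) < min t 1 * (4 * (d:ℝ))⁻¹ := by positivity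
    have hLnn : 0 ≤ L n := by
      simp only [hL]
      have g1 := Real.rpow_nonneg hb.le ((d:ℝ) - 2*SH)
      have g2 := Real.rpow_nonneg hδp.le (2*H0-2)
      positivity
    rw [hvolA n, hvolR n, hvolS n,
      ← ENNReal.ofReal_mul hLnn,
      ← ENNReal.ofReal_mul (mul_nonneg hLnn (by positivity)),
      ← ENNReal.ofReal_mul (mul_nonneg (mul_nonneg hLnn (by positivity)) (by linarith))]
    apply ENNReal.ofReal_le_ofReal
    -- real-number inequality
    have hA1 : ((2:ℝ) ^ n) ^ ((d:ℝ) - 2*SH) * ((2:ℝ) ^ n) ^ (d:ℕ) = ((2:ℝ) ^ n) ^ (2*(d:ℝ) - 2*SH) := by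
      rw [← Real.rpow_natCast ((2:ℝ) ^ n) d, ← Real.rpow_add hb]
      congr 1; ring
    have h5 : (δ n) ^ (2*H0-2) * (δ n) ^ ((2:ℕ):ℝ) = (δ n) ^ (2*H0) := by
      rw [← Real.rpow_add hδp]; congr 1; push_cast; ring
    have h2r : (δ n) ^ ((2:ℕ):ℝ) = (δ n) ^ (2:ℕ) := Real.rpow_natCast _ 2
    have h4n : ((2:ℝ) ^ n) ^ (-2 : ℝ) = ((4:ℝ) ^ n)⁻¹ := by
      rw [show (-2:ℝ) = -((2:ℕ):ℝ) by norm_num, Real.rpow_neg hb.le, Real.rpow_natCast]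
      congr 1
      rw [← pow_mul, show n*2 = 2*n by ring, pow_mul]
      norm_num
    have hδlow2 : min t 1 * (4*(d:ℝ))⁻¹ * ((2:ℝ) ^ n) ^ (-2:ℝ) ≤ δ n := by
      rw [h4n]
      have heq2 : min t 1 * (4*(d:ℝ))⁻¹ * ((4:ℝ) ^ n)⁻¹ = min t 1 * (4*(d:ℝ)*4 ^ n)⁻¹ := by
        rw [mul_inv]; ring
      rw [heq2]; exact hδlow n
    have hkey : (min t 1 * (4*(d:ℝ))⁻¹) ^ (2*H0) ≤ ((2:ℝ) ^ n) ^ (2*(d:ℝ) - 2*SH) * (δ n) ^ (2*H0) := by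
      have hs1 : (min t 1 * (4*(d:ℝ))⁻¹ * ((2:ℝ) ^ n) ^ (-2:ℝ)) ^ (2*H0) ≤ (δ n) ^ (2*H0) :=
        Real.rpow_le_rpow (by positivity) hδlow2 (by linarith)
      have hs2 : (min t 1 * (4*(d:ℝ))⁻¹ * ((2:ℝ) ^ n) ^ (-2:ℝ)) ^ (2*H0)
          = (min t 1 * (4*(d:ℝ))⁻¹) ^ (2*H0) * ((2:ℝ) ^ n) ^ ((-2)*(2*H0)) := by
        rw [Real.mul_rpow hm'.le (Real.rpow_nonneg hb.le _), ← Real.rpow_mul hb.le]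
      calc (min t 1 * (4*(d:ℝ))⁻¹) ^ (2*H0)
          = (min t 1 * (4*(d:ℝ))⁻¹) ^ (2*H0) * ((2:ℝ) ^ n) ^ ((-2)*(2*H0)) *
              ((2:ℝ) ^ n) ^ (2*(2*H0)) := by
            rw [mul_assoc, ← Real.rpow_add hb]
            norm_num
        _ ≤ (δ n) ^ (2*H0) * ((2:ℝ) ^ n) ^ (2*(2*H0)) := by
            apply mul_le_mul_of_nonneg_right ?_ (Real.rpow_nonneg hb.le _)
            rw [← hs2]; exact hs1
        _ ≤ (δ n) ^ (2*H0) * ((2:ℝ) ^ n) ^ (2*(d:ℝ) - 2*SH) := by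
            apply mul_le_mul_of_nonneg_left ?_ (Real.rpow_nonneg hδp.le _)
            apply Real.rpow_le_rpow_of_exponent_le hb1
            linarith [hcond]
        _ = ((2:ℝ) ^ n) ^ (2*(d:ℝ) - 2*SH) * (δ n) ^ (2*H0) := mul_comm _ _
    simp only [hcr, hL]
    calc exp (-1) * (2:ℝ)⁻¹ ^ d * (min t 1 * (4 * (d:ℝ))⁻¹) ^ (2 * H0) / 4
        ≤ exp (-1) * (2:ℝ)⁻¹ ^ d * (((2:ℝ) ^ n) ^ (2*(d:ℝ) - 2*SH) * (δ n) ^ (2*H0)) / 4 := by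
          have hpos4 : (0:ℝ) ≤ exp (-1) * (2:ℝ)⁻¹ ^ d := by positivity
          have := mul_le_mul_of_nonneg_left hkey hpos4
          linarith
      _ = exp (-1) * (2:ℝ)⁻¹ ^ d *
            ((((2:ℝ) ^ n) ^ ((d:ℝ) - 2*SH) * ((2:ℝ) ^ n) ^ (d:ℕ)) *
             ((δ n) ^ (2*H0-2) * (δ n) ^ ((2:ℕ):ℝ))) / 4 := by
          rw [hA1, h5]
      _ = exp (-1) * ((2:ℝ)⁻¹ ^ d * ((2:ℝ) ^ n) ^ ((d:ℝ) - 2 * SH)) * (δ n) ^ (2*H0 - 2) *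
            ((2:ℝ) ^ n) ^ (d:ℕ) * (δ n / 2) * (δ n / 2) := by
          rw [h2r]; ring
  have hIn : ∀ n : ℕ, ENNReal.ofReal cr ≤
      ∫⁻ s in Set.Ioo (0:ℝ) t, ∫⁻ r in Set.Ioo (0:ℝ) t, ∫⁻ ξ in A n, f s r ξ := by
    intro n
    have step_ξ : ∀ s ∈ S n, ∀ r ∈ R n,
        ENNReal.ofReal (L n) * volume (A n) ≤ ∫⁻ ξ in A n, f s r ξ := by
      intro s hs r hr
      rw [← setLIntegral_const]
      exact setLIntegral_mono' (hAmeas n) (fun ξ hξ => hpoint n s hs r hr ξ hξ)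
    have step_r : ∀ s ∈ S n,
        ENNReal.ofReal (L n) * volume (A n) * volume (R n) ≤
          ∫⁻ r in Set.Ioo (0:ℝ) t, ∫⁻ ξ in A n, f s r ξ := by
      intro s hs
      calc ENNReal.ofReal (L n) * volume (A n) * volume (R n)
          = ∫⁻ _ in R n, ENNReal.ofReal (L n) * volume (A n) := (setLIntegral_const _ _).symm
        _ ≤ ∫⁻ r in R n, ∫⁻ ξ in A n, f s r ξ :=
            setLIntegral_mono' measurableSet_Ioo (fun r hr => step_ξ s hs r hr)
        _ ≤ ∫⁻ r in Set.Ioo (0:ℝ) t, ∫⁻ ξ in A n, f s r ξ := lintegral_mono_set (hRsub n)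
    calc ENNReal.ofReal cr
        ≤ ENNReal.ofReal (L n) * volume (A n) * volume (R n) * volume (S n) := harith n
      _ = ∫⁻ _ in S n, ENNReal.ofReal (L n) * volume (A n) * volume (R n) :=
          (setLIntegral_const _ _).symm
      _ ≤ ∫⁻ s in S n, ∫⁻ r in Set.Ioo (0:ℝ) t, ∫⁻ ξ in A n, f s r ξ :=
          setLIntegral_mono' measurableSet_Ioo (fun s hs => step_r s hs)
      _ ≤ ∫⁻ s in Set.Ioo (0:ℝ) t, ∫⁻ r in Set.Ioo (0:ℝ) t, ∫⁻ ξ in A n, f s r ξ :=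
          lintegral_mono_set (hSsub n)
  -- disjointness
  have hAdisj : Pairwise (Function.onFun Disjoint A) := by
    have key : ∀ n m : ℕ, n < m → Disjoint (A n) (A m) := by
      intro n m h
      rw [Set.disjoint_left]
      intro ξ hξn hξm
      have h1 := (Set.mem_univ_pi.mp hξn ⟨0, hd⟩).2
      have h2 := (Set.mem_univ_pi.mp hξm ⟨0, hd⟩).1
      have h3 : (2:ℝ) ^ (n+1) ≤ 2 ^ m := pow_le_pow_right₀ one_le_two h
      linarith
    intro n m hnm
    rcases lt_or_gt_of_ne hnm with h | h
    · exact key n m h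
    · exact (key m n h).symm
  have hclaim1 : ∀ s r : ℝ, ∑' n, ∫⁻ ξ in A n, f s r ξ ≤ ∫⁻ ξ, f s r ξ := by
    intro s r
    rw [← lintegral_sum_measure, ← Measure.restrict_iUnion hAdisj hAmeas]
    exact lintegral_mono' Measure.restrict_le_self le_rfl
  rw [← top_le_iff]
  calc (⊤:ℝ≥0∞) = ∑' _ : ℕ, ENNReal.ofReal cr :=
        (ENNReal.tsum_const_eq_top_of_ne_zero (ENNReal.ofReal_pos.mpr hcrpos).ne').symm
    _ ≤ ∑' n, ∫⁻ s in Set.Ioo (0:ℝ) t, ∫⁻ r in Set.Ioo (0:ℝ) t, ∫⁻ ξ in A n, f s r ξ :=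
        ENNReal.tsum_le_tsum hIn
    _ ≤ ∫⁻ s in Set.Ioo (0:ℝ) t, ∑' n, ∫⁻ r in Set.Ioo (0:ℝ) t, ∫⁻ ξ in A n, f s r ξ :=
        helper_tsum_lintegral_le _ _
    _ ≤ ∫⁻ s in Set.Ioo (0:ℝ) t, ∫⁻ r in Set.Ioo (0:ℝ) t, ∑' n, ∫⁻ ξ in A n, f s r ξ :=
        lintegral_mono fun s => helper_tsum_lintegral_le _ _
    _ ≤ ∫⁻ s in Set.Ioo (0:ℝ) t, ∫⁻ r in Set.Ioo (0:ℝ) t, ∫⁻ ξ, f s r ξ :=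
        lintegral_mono fun s => lintegral_mono fun r => hclaim1 s r
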